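/- For every integer q ≥ 5, setting n = q² + q + 1, one has the identity and inequality (q+1)·q² + q²·(q+1)² − ((n−1)² + 4(n−1)) = q(q+1)(q−4) > 0. Consequently, any C_4-free graph on n = q²+q+1 vertices in which q+1 vertices have degree q and q² vertices have degree q+1 (such as the orthogonal polarity graph PG(q) for a prime power q) satisfies e_2(PG(q)) > e_2(F_n). -/
import Mathlib


/-- `G` contains a cycle of length `k` as a subgraph. -/
def HasCycleOfLength {V : Type*} (G : SimpleGraph V) (k : ℕ) : Prop :=
  ∃ (v : V) (w : G.Walk v v), w.IsCycle ∧ w.length = k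

theorem polarity_graph_beats_friendship (q n : ℕ) (hq : 5 ≤ q)
    (hn : n = q ^ 2 + q + 1) :
    (((q : ℤ) + 1) * q ^ 2 + q ^ 2 * ((q : ℤ) + 1) ^ 2 -
        (((n : ℤ) - 1) ^ 2 + 4 * ((n : ℤ) - 1)) =
      (q : ℤ) * (q + 1) * (q - 4)) ∧
    (0 < (q : ℤ) * (q + 1) * (q - 4)) ∧
    (∀ (G : SimpleGraph (Fin n)) [DecidableRel G.Adj], ¬ HasCycleOfLength G 4 →
      (Finset.univ.filter (fun v : Fin n => G.degree v = q)).card = q + 1 →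
      (Finset.univ.filter (fun v : Fin n => G.degree v = q + 1)).card = q ^ 2 →
      (n - 1) ^ 2 + 4 * (n - 1) < ∑ v : Fin n, G.degree v ^ 2) := by
  have hq' : (5 : ℤ) ≤ (q : ℤ) := by exact_mod_cast hq
  refine ⟨by subst hn; push_cast; ring, by nlinarith, ?_⟩
  intro G _ _ h1 h2
  set S1 := Finset.univ.filter (fun v : Fin n => G.degree v = q) with hS1
  set S2 := Finset.univ.filter (fun v : Fin n => G.degree v = q + 1) with hS2
  have hdisj : Disjoint S1 S2 := by
    rw [Finset.disjoint_left]
    intro a ha hb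
    simp only [hS1, hS2, Finset.mem_filter] at ha hb
    omega
  have hcard : (S1 ∪ S2).card = n := by
    rw [Finset.card_union_of_disjoint hdisj, h1, h2, hn]; ring
  have huniv : S1 ∪ S2 = Finset.univ := by
    apply Finset.eq_univ_of_card
    simpa using hcard
  have hsum : ∑ v : Fin n, G.degree v ^ 2 = (q + 1) * q ^ 2 + q ^ 2 * (q + 1) ^ 2 := by
    rw [← huniv, Finset.sum_union hdisj]
    have e1 : ∑ v ∈ S1, G.degree v ^ 2 = (q + 1) * q ^ 2 := by
      rw [Finset.sum_congr rfl (fun v hv => by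
        simp only [hS1, Finset.mem_filter] at hv; rw [hv.2]),
        Finset.sum_const, h1, smul_eq_mul]
    have e2 : ∑ v ∈ S2, G.degree v ^ 2 = q ^ 2 * (q + 1) ^ 2 := by
      rw [Finset.sum_congr rfl (fun v hv => by
        simp only [hS2, Finset.mem_filter] at hv; rw [hv.2]),
        Finset.sum_const, h2, smul_eq_mul]
    rw [e1, e2]
  rw [hsum, hn]
  have : q ^ 2 + q + 1 - 1 = q ^ 2 + q := by omega
  rw [this]
  nlinarith [sq_nonneg q]
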